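/- Let M be a complete pointed metric space and f ∈ Lip₀(M), and suppose the induced linear functional T_f on the Lipschitz-free space F(M) attains its norm at an element m ∈ F(M) with ‖m‖ = 1 which is a convex integral of molecules, i.e., m = Φ*μ for a positive measure μ on the Stone–Čech compactification β(M̃) of the set M̃ of pairs of distinct points, concentrated on M̃, with ‖μ‖ = ‖m‖ = 1, where Φ : Lip₀(M) → C(βM̃) is the de Leeuw transform (Φf)(p,q) = (f(q)-f(p))/d(p,q). Then f strongly attains its norm: |f(q)-f(p)|/d(p,q) = ‖f‖ for some pair of distinct points (p,q). -/

import Mathlib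

open Filter Metric MeasureTheory

noncomputable def lipNorm {M : Type*} [MetricSpace M] (f : M → ℝ) : ℝ :=
  sSup {r : ℝ | ∃ p q : M, p ≠ q ∧ r = |f q - f p| / dist p q}

noncomputable def pnormAt {M : Type*} [MetricSpace M] (f : M → ℝ) (p : M) : ℝ :=
  sSup {r : ℝ | ∃ q : M, q ≠ p ∧ r = |f q - f p| / dist p q}

/-- `f` strongly attains its (Lipschitz) norm. -/
def StronglyAttains {M : Type*} [MetricSpace M] (f : M → ℝ) : Prop :=
  ∃ p q : M, p ≠ q ∧ |f q - f p| / dist p q = lipNorm f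

/-- `f` attains its pointwise norm. -/
def PointwiseAttains {M : Type*} [MetricSpace M] (f : M → ℝ) : Prop :=
  ∃ p : M, pnormAt f p = lipNorm f

/-- if f ∈ Lip₀(M) (M complete) and T_f attains its norm at a norm-one
convex integral of molecules — i.e. the pairing ∫ S(f,p,q) dμ over the set M̃ of pairs
of distinct points, against a probability measure μ concentrated on M̃, has absolute
value ‖f‖ — then f strongly attains its norm. -/
theorem stmt13 {M : Type*} [MetricSpace M] [CompleteSpace M]
    [MeasurableSpace M] [BorelSpace M] (z : M)
    (f : M → ℝ) (h0 : f z = 0) (hlip : ∃ K, LipschitzWith K f)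
    (μ : Measure {x : M × M // x.1 ≠ x.2}) (hprob : IsProbabilityMeasure μ)
    (hatt : |∫ x : {x : M × M // x.1 ≠ x.2},
        (f x.val.2 - f x.val.1) / dist x.val.1 x.val.2 ∂μ| = lipNorm f) :
    StronglyAttains f := by

  classical
  obtain ⟨K, hK⟩ := hlip
  set g : {x : M × M // x.1 ≠ x.2} → ℝ :=
    fun x => (f x.val.2 - f x.val.1) / dist x.val.1 x.val.2 with hg
  -- the type of pairs is nonempty
  have hne : Nonempty {x : M × M // x.1 ≠ x.2} := by
    by_contra h
    rw [not_nonempty_iff] at h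
    have h1 : μ Set.univ = 1 := measure_univ
    rw [Set.univ_eq_empty_iff.mpr h] at h1
    simp at h1
  -- the defining set is bounded above
  have hSbd : BddAbove {r : ℝ | ∃ p q : M, p ≠ q ∧ r = |f q - f p| / dist p q} := by
    refine ⟨(K : ℝ), ?_⟩
    rintro r ⟨p, q, hpq, rfl⟩
    rw [div_le_iff₀ (dist_pos.mpr hpq)]
    have h1 := hK.dist_le_mul q p
    rw [Real.dist_eq] at h1
    calc |f q - f p| ≤ K * dist q p := h1
      _ = K * dist p q := by rw [dist_comm]
  have hmem : ∀ p q : M, p ≠ q → |f q - f p| / dist p q ≤ lipNorm f := by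
    intro p q h
    exact le_csSup hSbd ⟨p, q, h, rfl⟩
  have habsg : ∀ x, |g x| = |f x.val.2 - f x.val.1| / dist x.val.1 x.val.2 := by
    intro x
    rw [hg]
    simp [abs_div, abs_of_nonneg dist_nonneg]
  have habs : ∀ x, |g x| ≤ lipNorm f := by
    intro x
    rw [habsg x]
    exact hmem _ _ x.prop
  have hL0 : 0 ≤ lipNorm f := hatt ▸ abs_nonneg _
  by_cases hLz : lipNorm f = 0
  · obtain ⟨x⟩ := hne
    refine ⟨x.val.1, x.val.2, x.prop, ?_⟩
    have h1 := hmem _ _ x.prop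
    have h2 : 0 ≤ |f x.val.2 - f x.val.1| / dist x.val.1 x.val.2 :=
      div_nonneg (abs_nonneg _) dist_nonneg
    rw [hLz] at h1 ⊢
    linarith
  have hne' : μ ≠ 0 := IsProbabilityMeasure.ne_zero μ
  haveI : (ae μ).NeBot := ae_neBot.mpr hne'
  by_cases hi : Integrable g μ
  · rcases (abs_eq hL0).mp hatt with hI | hI
    · -- integral equals lipNorm f
      have hnn : ∀ x, 0 ≤ lipNorm f - g x := fun x => by
        have := (abs_le.mp (habs x)).2; linarith
      have hint : Integrable (fun x => lipNorm f - g x) μ := (integrable_const _).sub hi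
      have hz : ∫ x, (lipNorm f - g x) ∂μ = 0 := by
        rw [integral_sub (integrable_const _) hi, integral_const, probReal_univ]
        simp [hI]
      have hae := (integral_eq_zero_iff_of_nonneg hnn hint).mp hz
      obtain ⟨x, hx⟩ := hae.exists
      have hgx : g x = lipNorm f := by
        have hx' : lipNorm f - g x = 0 := hx
        linarith
      refine ⟨x.val.1, x.val.2, x.prop, ?_⟩
      rw [← habsg x, hgx, abs_of_nonneg hL0]
    · -- integral equals -lipNorm f
      have hnn : ∀ x, 0 ≤ lipNorm f + g x := fun x => by
        have := (abs_le.mp (habs x)).1; linarith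
      have hint : Integrable (fun x => lipNorm f + g x) μ := (integrable_const _).add hi
      have hz : ∫ x, (lipNorm f + g x) ∂μ = 0 := by
        rw [integral_add (integrable_const _) hi, integral_const, probReal_univ]
        simp [hI]
      have hae := (integral_eq_zero_iff_of_nonneg hnn hint).mp hz
      obtain ⟨x, hx⟩ := hae.exists
      have hgx : g x = -lipNorm f := by
        have : lipNorm f + g x = 0 := hx
        linarith
      refine ⟨x.val.1, x.val.2, x.prop, ?_⟩
      rw [← habsg x, hgx, abs_neg, abs_of_nonneg hL0]
  · exfalso
    rw [integral_undef hi] at hatt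
    simp at hatt
    exact hLz hatt.symm
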